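/- Tail estimate for the discrete Fourier transform of a Schwartz function: Let g : ℝ → ℂ be a Schwartz function; for each positive integer n let g_n : ℤ → ℂ be g_n(j) = g(j/n) and let (g_n)^_n denote its discrete Fourier transform. Then for every ε > 0 there exists N ∈ ℕ such that for all integers n > N and all integers L, L' with N < L ≤ L' ≤ n: (1/n) ∑_{j=L·n}^{L'·n - 1} |(g_n)^_n(j)| < ε and (1/n) ∑_{j=-L'·n}^{-L·n - 1} |(g_n)^_n(j)| < ε. -/

import Mathlib

open Complex Finset

/-- The discrete derivative: `Dg(j) = n·(g(j+1) - g(j))` for `-n² ≤ j ≤ n²-2`,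
and `Dg(n²-1) = 0`. -/
noncomputable def discDeriv (n : ℕ) (g : ℤ → ℂ) : ℤ → ℂ :=
  fun j => if j = (n : ℤ) ^ 2 - 1 then 0 else (n : ℂ) * (g (j + 1) - g j)

/-- The discrete shift: `Sg(j) = g(j+1)` for `-n² ≤ j ≤ n²-2`, and `Sg(n²-1) = 0`. -/
noncomputable def discShift (n : ℕ) (g : ℤ → ℂ) : ℤ → ℂ :=
  fun j => if j = (n : ℤ) ^ 2 - 1 then 0 else g (j + 1)
/-- The discrete Fourier transform `ĝ_n(l) = (1/n) ∑_{j=-n²}^{n²-1} g(j) e^{-π i j l/n²}`. -/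
noncomputable def discFT (n : ℕ) (g : ℤ → ℂ) : ℤ → ℂ :=
  fun l => (1 / (n : ℂ)) * ∑ j ∈ Finset.Icc (-(n : ℤ) ^ 2) ((n : ℤ) ^ 2 - 1),
    g j * Complex.exp (-((Real.pi : ℂ) * Complex.I * (j : ℂ) * (l : ℂ)) / (n : ℂ) ^ 2)

/-- `ψ_n(l) = n·(e^{π i l/n²} - 1)`. -/
noncomputable def psiF (n : ℕ) (l : ℤ) : ℂ :=
  (n : ℂ) * (Complex.exp ((Real.pi : ℂ) * Complex.I * (l : ℂ) / (n : ℂ) ^ 2) - 1)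

/-- `φ_n(l) = n·(e^{-π i l/n²} - 1)`. -/
noncomputable def phiF (n : ℕ) (l : ℤ) : ℂ :=
  (n : ℂ) * (Complex.exp (-((Real.pi : ℂ) * Complex.I * (l : ℂ)) / (n : ℂ) ^ 2) - 1)

/-- `C_n(l) = g(n²-1)·e^{-π i (n²-1) l/n²} - g(-n²)·e^{π i l}`. -/
noncomputable def CF (n : ℕ) (g : ℤ → ℂ) (l : ℤ) : ℂ :=
  g ((n : ℤ) ^ 2 - 1) *
      Complex.exp (-((Real.pi : ℂ) * Complex.I * ((n : ℂ) ^ 2 - 1) * (l : ℂ)) / (n : ℂ) ^ 2) -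
    g (-(n : ℤ) ^ 2) * Complex.exp ((Real.pi : ℂ) * Complex.I * (l : ℂ))

/-- `D_n(l) = -(1/n)·g(-n²)·e^{π i l/n²}·e^{π i l}`. -/
noncomputable def DF (n : ℕ) (g : ℤ → ℂ) (l : ℤ) : ℂ :=
  -(1 / (n : ℂ)) * g (-(n : ℤ) ^ 2) *
    Complex.exp ((Real.pi : ℂ) * Complex.I * (l : ℂ) / (n : ℂ) ^ 2) *
    Complex.exp ((Real.pi : ℂ) * Complex.I * (l : ℂ))

/-- `C'_n(l) = -(Dg)(-n²)·e^{π i l}`. -/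
noncomputable def CF' (n : ℕ) (g : ℤ → ℂ) (l : ℤ) : ℂ :=
  -(discDeriv n g (-(n : ℤ) ^ 2)) * Complex.exp ((Real.pi : ℂ) * Complex.I * (l : ℂ))

/-- `D'_n(l) = -(1/n)·(Dg)(-n²)·e^{π i l/n²}·e^{π i l}`. -/
noncomputable def DF' (n : ℕ) (g : ℤ → ℂ) (l : ℤ) : ℂ :=
  -(1 / (n : ℂ)) * discDeriv n g (-(n : ℤ) ^ 2) *
    Complex.exp ((Real.pi : ℂ) * Complex.I * (l : ℂ) / (n : ℂ) ^ 2) *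
    Complex.exp ((Real.pi : ℂ) * Complex.I * (l : ℂ))

/-- `E_n(l) = φ_n(l)·D_n(l) - C_n(l)`. -/
noncomputable def EF (n : ℕ) (g : ℤ → ℂ) (l : ℤ) : ℂ :=
  phiF n l * DF n g l - CF n g l

/-- `F_n(l) = ψ_n(l)·φ_n(l)·D_n(l) - ψ_n(l)·C_n(l) + φ_n(l)·D'_n(l) - C'_n(l)`. -/
noncomputable def FF (n : ℕ) (g : ℤ → ℂ) (l : ℤ) : ℂ :=
  psiF n l * phiF n l * DF n g l - psiF n l * CF n g l + phiF n l * DF' n g l - CF' n g l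

set_option maxHeartbeats 1000000

/- ===== auxiliary lemmas ===== -/

lemma tele_sum {a : ℤ} (ha : 2 ≤ a) (b : ℤ) :
    ∑ j ∈ Finset.Icc a b, ((j:ℝ)^2)⁻¹ ≤ ((a:ℝ) - 1)⁻¹ := by
  have har : (2:ℝ) ≤ (a:ℝ) := by exact_mod_cast ha
  rcases lt_or_ge b a with hb | hb
  · rw [Finset.Icc_eq_empty (by omega)]
    simp only [Finset.sum_empty]
    have : (0:ℝ) < (a:ℝ)-1 := by linarith
    positivity
  · have key : ∀ c : ℤ, a ≤ c → ∑ j ∈ Finset.Icc a c, ((j:ℝ)^2)⁻¹ ≤ ((a:ℝ)-1)⁻¹ - (c:ℝ)⁻¹ := by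
      intro c hc
      refine Int.le_induction (motive := fun c _ => ∑ j ∈ Finset.Icc a c, ((j:ℝ)^2)⁻¹ ≤ ((a:ℝ)-1)⁻¹ - (c:ℝ)⁻¹) ?_ ?_ c hc
      · rw [Finset.Icc_self, Finset.sum_singleton]
        have h1 : (1:ℝ) ≤ (a:ℝ) - 1 := by
          have : (2:ℝ) ≤ (a:ℝ) := by exact_mod_cast ha
          linarith
        have h2 : (0:ℝ) < (a:ℝ) - 1 := by linarith
        have h3 : (0:ℝ) < (a:ℝ) := by linarith
        have heq : ((a:ℝ)-1)⁻¹ - (a:ℝ)⁻¹ = (((a:ℝ)-1) * (a:ℝ))⁻¹ := by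
          field_simp
          ring
        rw [heq]
        apply inv_anti₀ (by positivity)
        nlinarith
      · intro c hc ih
        have hins : Finset.Icc a (c+1) = insert (c+1) (Finset.Icc a c) := by
          ext x; simp only [Finset.mem_Icc, Finset.mem_insert]; omega
        rw [hins, Finset.sum_insert (by simp only [Finset.mem_Icc]; omega)]
        have hcr : (2:ℝ) ≤ (c:ℝ) := by
          have h4 : (2:ℤ) ≤ c := le_trans ha hc
          exact_mod_cast h4
        have h2 : ((c:ℝ)+1)⁻¹ ≤ (c:ℝ)⁻¹ := by
          apply inv_anti₀ (by linarith) (by linarith)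
        have h3 : (((c:ℝ)+1)^2)⁻¹ ≤ (c:ℝ)⁻¹ - ((c:ℝ)+1)⁻¹ := by
          have heq : (c:ℝ)⁻¹ - ((c:ℝ)+1)⁻¹ = ((c:ℝ) * ((c:ℝ)+1))⁻¹ := by field_simp; ring
          rw [heq]
          apply inv_anti₀ (by positivity)
          nlinarith
        push_cast
        push_cast at ih
        linarith
    have hbr : (0:ℝ) < (b:ℝ) := by
      have : (0:ℤ) < b := by omega
      exact_mod_cast this
    have : (0:ℝ) ≤ (b:ℝ)⁻¹ := by positivity
    linarith [key b hb]

lemma sum_neg_Icc (a b : ℤ) (f : ℤ → ℝ) :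
    ∑ j ∈ Finset.Icc a b, f j = ∑ j ∈ Finset.Icc (-b) (-a), f (-j) := by
  apply Finset.sum_nbij' (i := fun j => -j) (j := fun j => -j)
  · intro x hx; simp only [Finset.mem_Icc] at *; omega
  · intro x hx; simp only [Finset.mem_Icc] at *; omega
  · intro x _; ring
  · intro x _; ring
  · intro x _; rw [neg_neg]

lemma mvt_bound {f : ℝ → ℂ} (hf : Differentiable ℝ f) {a b C : ℝ} (hab : a ≤ b)
    (hC : ∀ x ∈ Set.Icc a b, ‖deriv f x‖ ≤ C) : ‖f b - f a‖ ≤ C * (b - a) := by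
  have := (convex_Icc a b).norm_image_sub_le_of_norm_deriv_le (fun x _ => hf x) hC
    (Set.left_mem_Icc.2 hab) (Set.right_mem_Icc.2 hab)
  rwa [Real.norm_eq_abs, _root_.abs_of_nonneg (sub_nonneg.2 hab)] at this

lemma schwartz_decay2 (f : SchwartzMap ℝ ℂ) : ∃ C : ℝ, 0 < C ∧ ∀ x : ℝ, ‖f x‖ ≤ C / (1 + x^2) := by
  obtain ⟨C0, hC0p, hC0⟩ := f.decay 0 0
  obtain ⟨C2, hC2p, hC2⟩ := f.decay 2 0
  refine ⟨C0 + C2 + 1, by positivity, fun x => ?_⟩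
  have h0 := hC0 x
  have h2 := hC2 x
  rw [norm_iteratedFDeriv_zero] at h0 h2
  rw [div_eq_inv_mul, ← inv_mul_le_iff₀ (by positivity), inv_inv]
  simp only [pow_zero, one_mul] at h0
  have hx : ‖x‖^2 = x^2 := by rw [Real.norm_eq_abs, _root_.sq_abs]
  rw [hx] at h2
  nlinarith [norm_nonneg (f x)]

lemma abs_exp_theta_sub_one (θ : ℝ) :
    ‖Complex.exp ((θ:ℂ) * Complex.I) - 1‖ = 2 * |Real.sin (θ/2)| := by
  rw [Complex.exp_mul_I]
  have h1 : (Complex.cos θ + Complex.sin θ * Complex.I - 1)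
      = Complex.ofReal (Real.cos θ - 1) + Complex.ofReal (Real.sin θ) * Complex.I := by
    push_cast; ring
  rw [h1, Complex.norm_def, Complex.normSq_add_mul_I]
  have h2 : (Real.cos θ - 1)^2 + (Real.sin θ)^2 = (2 * |Real.sin (θ/2)|)^2 := by
    have hs := Real.sin_sq_eq_half_sub (θ/2)
    have h3 : 2*(θ/2) = θ := by ring
    rw [h3] at hs
    have h4 : |Real.sin (θ/2)|^2 = Real.sin (θ/2)^2 := _root_.sq_abs _
    nlinarith [Real.sin_sq_add_cos_sq θ]
  rw [h2, Real.sqrt_sq (by positivity)]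

lemma psiF_arg (n : ℕ) (l : ℤ) :
    (Real.pi : ℂ) * Complex.I * (l : ℂ) / (n : ℂ) ^ 2
      = ((Real.pi * l / (n:ℝ)^2 : ℝ) : ℂ) * Complex.I := by
  push_cast; ring

lemma phiF_arg (n : ℕ) (l : ℤ) :
    -((Real.pi : ℂ) * Complex.I * (l : ℂ)) / (n : ℂ) ^ 2
      = ((Real.pi * (-l) / (n:ℝ)^2 : ℝ) : ℂ) * Complex.I := by
  push_cast; ring

lemma psiF_abs (n : ℕ) (l : ℤ) :
    ‖psiF n l‖ = 2 * n * |Real.sin (Real.pi * l / (2 * (n:ℝ)^2))| := by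
  rw [psiF, norm_mul, psiF_arg, abs_exp_theta_sub_one]
  have : Real.pi * l / (n:ℝ)^2 / 2 = Real.pi * l / (2*(n:ℝ)^2) := by ring
  rw [this, Complex.norm_natCast]
  ring

lemma phiF_abs (n : ℕ) (l : ℤ) :
    ‖phiF n l‖ = 2 * n * |Real.sin (Real.pi * l / (2 * (n:ℝ)^2))| := by
  rw [phiF, norm_mul, phiF_arg, abs_exp_theta_sub_one]
  have : Real.pi * (-l) / (n:ℝ)^2 / 2 = -(Real.pi * l / (2*(n:ℝ)^2)) := by ring
  rw [this, Real.sin_neg, abs_neg, Complex.norm_natCast]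
  ring

lemma psiF_upper (n : ℕ) (hn : 1 ≤ n) (l : ℤ) :
    ‖psiF n l‖ ≤ Real.pi * |(l:ℝ)| / n := by
  rw [psiF_abs]
  have h1 : |Real.sin (Real.pi * l / (2 * (n:ℝ)^2))| ≤ |Real.pi * l / (2 * (n:ℝ)^2)| :=
    Real.abs_sin_le_abs
  have hnr : (0:ℝ) < n := by exact_mod_cast hn
  have h2 : |Real.pi * l / (2 * (n:ℝ)^2)| = Real.pi * |(l:ℝ)| / (2 * (n:ℝ)^2) := by
    rw [abs_div, abs_mul, abs_of_pos Real.pi_pos, abs_of_pos (by positivity : (0:ℝ) < 2*(n:ℝ)^2)]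
  calc 2 * (n:ℝ) * |Real.sin (Real.pi * l / (2 * (n:ℝ)^2))|
      ≤ 2 * (n:ℝ) * (Real.pi * |(l:ℝ)| / (2 * (n:ℝ)^2)) := by
        apply mul_le_mul_of_nonneg_left _ (by positivity)
        rw [← h2]; exact h1
    _ = Real.pi * |(l:ℝ)| / n := by field_simp

lemma psiF_lower (n : ℕ) (hn : 1 ≤ n) (l : ℤ) (hl : |l| ≤ (n:ℤ)^2) :
    2 * |(l:ℝ)| / n ≤ ‖psiF n l‖ := by
  rw [psiF_abs]
  have hnr : (0:ℝ) < n := by exact_mod_cast hn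
  have hlr : |(l:ℝ)| ≤ (n:ℝ)^2 := by
    have h := hl
    have : ((|l| : ℤ) : ℝ) ≤ (((n:ℤ)^2 : ℤ) : ℝ) := by exact_mod_cast h
    push_cast at this
    exact this
  set x : ℝ := Real.pi * l / (2 * (n:ℝ)^2) with hx
  have habsx : |x| = Real.pi * |(l:ℝ)| / (2 * (n:ℝ)^2) := by
    rw [hx, abs_div, abs_mul, abs_of_pos Real.pi_pos,
      abs_of_pos (by positivity : (0:ℝ) < 2*(n:ℝ)^2)]
  have hx2 : |x| ≤ Real.pi / 2 := by
    rw [habsx, div_le_div_iff₀ (by positivity) (by norm_num)]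
    calc Real.pi * |(l:ℝ)| * 2 ≤ Real.pi * (n:ℝ)^2 * 2 := by nlinarith [Real.pi_pos]
      _ = Real.pi * (2 * (n:ℝ)^2) := by ring
  have hsin : 2/Real.pi * |x| ≤ |Real.sin x| := by
    have h1 : 2/Real.pi * |x| ≤ Real.sin |x| := Real.mul_le_sin (abs_nonneg x) hx2
    have h2 : Real.sin |x| ≤ |Real.sin x| := by
      rcases abs_cases x with ⟨h, _⟩ | ⟨h, _⟩
      · rw [h]; exact le_abs_self _
      · rw [h, Real.sin_neg]; exact neg_le_abs _
    linarith
  calc 2 * |(l:ℝ)| / n = 2 * (n:ℝ) * (2/Real.pi * (Real.pi * |(l:ℝ)| / (2 * (n:ℝ)^2))) := by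
        field_simp
    _ ≤ 2 * (n:ℝ) * |Real.sin x| := by
        apply mul_le_mul_of_nonneg_left _ (by positivity)
        rw [← habsx]; exact hsin

lemma phiF_abs_eq_psiF (n : ℕ) (l : ℤ) : ‖phiF n l‖ = ‖psiF n l‖ := by
  rw [phiF_abs, psiF_abs]

noncomputable def auxE (n : ℕ) (l : ℤ) (j : ℤ) : ℂ :=
  Complex.exp (-((Real.pi : ℂ) * Complex.I * (j : ℂ) * (l : ℂ)) / (n : ℂ) ^ 2)

lemma discFT_eq (n : ℕ) (h : ℤ → ℂ) (l : ℤ) :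
    discFT n h l = (1 / (n : ℂ)) * ∑ j ∈ Finset.Icc (-(n : ℤ) ^ 2) ((n : ℤ) ^ 2 - 1),
      h j * auxE n l j := rfl

lemma discFT_sum_by_parts (n : ℕ) (hn : 1 ≤ n) (h : ℤ → ℂ) (l : ℤ) :
    psiF n l * discFT n h l = discFT n (discDeriv n h) l + EF n h l := by
  have hn0 : (n:ℂ) ≠ 0 := Nat.cast_ne_zero.2 (by omega)
  have hm1 : (1:ℤ) ≤ (n:ℤ)^2 := by
    have h1 : (1:ℤ) ≤ (n:ℤ) := by exact_mod_cast hn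
    nlinarith
  set m : ℤ := (n:ℤ)^2 with hm
  set E : ℤ → ℂ := auxE n l with hE
  -- shift property
  have hshift : ∀ j : ℤ, Complex.exp ((Real.pi:ℂ) * Complex.I * (l:ℂ) / (n:ℂ)^2) * E j
      = E (j - 1) := by
    intro j
    rw [hE]
    unfold auxE
    rw [← Complex.exp_add]
    congr 1
    push_cast
    field_simp
    ring
  have hsplit_top : Finset.Icc (-m) (m-1) = insert (m-1) (Finset.Icc (-m) (m-2)) := by
    ext x; simp only [Finset.mem_Icc, Finset.mem_insert]; omega
  have hDFT : discFT n (discDeriv n h) l = ∑ j ∈ Finset.Icc (-m) (m-2), (h (j+1) - h j) * E j := by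
    rw [discFT_eq, ← hm, ← hE, hsplit_top, Finset.sum_insert (by simp only [Finset.mem_Icc]; omega)]
    have hz : discDeriv n h (m-1) = 0 := by rw [discDeriv, if_pos]; rw [hm]
    rw [hz, zero_mul, zero_add, Finset.mul_sum]
    apply Finset.sum_congr rfl
    intro j hj
    simp only [Finset.mem_Icc] at hj
    rw [discDeriv, if_neg (by omega)]
    field_simp
  have hLHS : psiF n l * discFT n h l
      = (∑ j ∈ Finset.Icc (-m) (m-1), h j * E (j-1))
        - (∑ j ∈ Finset.Icc (-m) (m-1), h j * E j) := by
    rw [psiF, discFT_eq, ← hm, ← hE]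
    set e := Complex.exp ((Real.pi:ℂ) * Complex.I * (l:ℂ) / (n:ℂ)^2) with he
    set S := ∑ j ∈ Finset.Icc (-m) (m-1), h j * E j with hS
    have h1 : (n:ℂ) * (e - 1) * (1/(n:ℂ) * S) = e * S - S := by field_simp
    rw [h1, hS, Finset.mul_sum, ← Finset.sum_sub_distrib, ← Finset.sum_sub_distrib]
    apply Finset.sum_congr rfl
    intro j hj
    rw [← hshift j]
    ring
  have hreindex : (∑ j ∈ Finset.Icc (-m) (m-1), h j * E (j-1))
      = ∑ j ∈ Finset.Icc (-m-1) (m-2), h (j+1) * E j := by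
    have hmap : Finset.Icc (-m) (m-1) = Finset.map (addRightEmbedding 1) (Finset.Icc (-m-1) (m-2)) := by
      rw [Finset.map_add_right_Icc]; congr 1 <;> ring
    rw [hmap, Finset.sum_map]
    apply Finset.sum_congr rfl
    intro j _
    simp only [addRightEmbedding_apply]
    rw [add_sub_cancel_right]
  have hsplit_bot : Finset.Icc (-m-1) (m-2) = insert (-m-1) (Finset.Icc (-m) (m-2)) := by
    ext x; simp only [Finset.mem_Icc, Finset.mem_insert]; omega
  have hEF : EF n h l = h (-m) * E (-m-1) - h (m-1) * E (m-1) := by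
    rw [EF, phiF, DF, CF, ← hm, hE]
    unfold auxE
    have e1 : Complex.exp (-((Real.pi:ℂ) * Complex.I * (l:ℂ)) / (n:ℂ)^2) *
        Complex.exp ((Real.pi:ℂ) * Complex.I * (l:ℂ) / (n:ℂ)^2) = 1 := by
      rw [← Complex.exp_add]
      rw [← Complex.exp_zero]
      congr 1
      field_simp
      ring
    have e2 : Complex.exp ((Real.pi:ℂ) * Complex.I * (l:ℂ) / (n:ℂ)^2) *
        Complex.exp ((Real.pi:ℂ) * Complex.I * (l:ℂ))
        = Complex.exp (-((Real.pi:ℂ) * Complex.I * ((-m-1:ℤ):ℂ) * (l:ℂ)) / (n:ℂ)^2) := by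
      rw [← Complex.exp_add]
      congr 1
      push_cast [hm]
      field_simp
      ring
    have e3 : Complex.exp (-((Real.pi:ℂ) * Complex.I * ((n:ℂ)^2 - 1) * (l:ℂ)) / (n:ℂ)^2)
        = Complex.exp (-((Real.pi:ℂ) * Complex.I * ((m-1:ℤ):ℂ) * (l:ℂ)) / (n:ℂ)^2) := by
      congr 1
      push_cast [hm]
      ring
    rw [e3]
    have expand : (n:ℂ) * (Complex.exp (-((Real.pi:ℂ) * Complex.I * (l:ℂ)) / (n:ℂ)^2) - 1) *
        (-(1/(n:ℂ)) * h (-m) * Complex.exp ((Real.pi:ℂ) * Complex.I * (l:ℂ) / (n:ℂ)^2) *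
          Complex.exp ((Real.pi:ℂ) * Complex.I * (l:ℂ)))
        = -(h (-m) * (Complex.exp (-((Real.pi:ℂ) * Complex.I * (l:ℂ)) / (n:ℂ)^2) *
              Complex.exp ((Real.pi:ℂ) * Complex.I * (l:ℂ) / (n:ℂ)^2)) *
            Complex.exp ((Real.pi:ℂ) * Complex.I * (l:ℂ)))
          + h (-m) * (Complex.exp ((Real.pi:ℂ) * Complex.I * (l:ℂ) / (n:ℂ)^2) *
              Complex.exp ((Real.pi:ℂ) * Complex.I * (l:ℂ))) := by
      field_simp
      ring
    rw [expand, e1, e2]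
    ring
  rw [hLHS, hreindex, hsplit_bot, Finset.sum_insert (by simp only [Finset.mem_Icc]; omega),
    hsplit_top, Finset.sum_insert (by simp only [Finset.mem_Icc]; omega), hDFT, hEF]
  have hsum : ∑ j ∈ Finset.Icc (-m) (m-2), (h (j+1) - h j) * E j
      = (∑ j ∈ Finset.Icc (-m) (m-2), h (j+1) * E j)
        - ∑ j ∈ Finset.Icc (-m) (m-2), h j * E j := by
    rw [← Finset.sum_sub_distrib]
    apply Finset.sum_congr rfl; intro j _; ring
  rw [hsum]
  have e0 : -m-1+1 = -m := by ring
  rw [e0]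
  ring

lemma discFT_sum_by_parts2 (n : ℕ) (hn : 1 ≤ n) (h : ℤ → ℂ) (l : ℤ) :
    psiF n l ^ 2 * discFT n h l
      = discFT n (discDeriv n (discDeriv n h)) l + FF n h l := by
  have h1 := discFT_sum_by_parts n hn h l
  have h2 := discFT_sum_by_parts n hn (discDeriv n h) l
  have hDF : DF n (discDeriv n h) l = DF' n h l := rfl
  have hCF : CF n (discDeriv n h) l = CF' n h l := by
    rw [CF, CF']
    have hz : discDeriv n h ((n:ℤ)^2 - 1) = 0 := by rw [discDeriv, if_pos rfl]
    rw [hz, zero_mul, zero_sub]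
    ring
  have hEF2 : EF n (discDeriv n h) l = phiF n l * DF' n h l - CF' n h l := by
    rw [EF, hDF, hCF]
  calc psiF n l ^ 2 * discFT n h l = psiF n l * (psiF n l * discFT n h l) := by ring
    _ = psiF n l * (discFT n (discDeriv n h) l + EF n h l) := by rw [h1]
    _ = psiF n l * discFT n (discDeriv n h) l + psiF n l * EF n h l := by ring
    _ = discFT n (discDeriv n (discDeriv n h)) l + EF n (discDeriv n h) l
          + psiF n l * EF n h l := by rw [h2]
    _ = discFT n (discDeriv n (discDeriv n h)) l + FF n h l := by
          rw [hEF2, EF, FF]; ring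

lemma discFT_abs_le (n : ℕ) (hn : 1 ≤ n) (h : ℤ → ℂ) (l : ℤ) :
    ‖discFT n h l‖
      ≤ (1/(n:ℝ)) * ∑ j ∈ Finset.Icc (-(n:ℤ)^2) ((n:ℤ)^2 - 1), ‖h j‖ := by
  rw [discFT_eq, norm_mul]
  have h1 : ‖1/(n:ℂ)‖ = 1/(n:ℝ) := by
    rw [norm_div, norm_one, Complex.norm_natCast]
  rw [h1]
  apply mul_le_mul_of_nonneg_left _ (by positivity)
  refine le_trans (norm_sum_le _ _) ?_
  apply Finset.sum_le_sum
  intro j _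
  rw [norm_mul]
  have h2 : ‖auxE n l j‖ = 1 := by
    rw [auxE]
    have harg : -((Real.pi:ℂ) * Complex.I * (j:ℂ) * (l:ℂ)) / (n:ℂ)^2
        = ((-(Real.pi * j * l) / (n:ℝ)^2 : ℝ) : ℂ) * Complex.I := by push_cast; ring
    rw [harg, Complex.norm_exp_ofReal_mul_I]
  rw [h2, mul_one]

lemma arith8 {n : ℕ} (hn : 2 ≤ n) (j : ℤ) {y : ℝ}
    (h1 : (j:ℝ)/(n:ℝ) ≤ y) (h2 : y ≤ ((j:ℝ)+2)/(n:ℝ)) :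
    (n:ℝ)^2 + (j:ℝ)^2 ≤ 8*(n:ℝ)^2*(1+y^2) := by
  have hnr : (2:ℝ) ≤ (n:ℝ) := by exact_mod_cast hn
  have hnp : (0:ℝ) < (n:ℝ) := by linarith
  rcases le_or_gt 0 (j:ℝ) with hj | hj
  · have h3 : (j:ℝ) ≤ (n:ℝ)*y := by
      rw [div_le_iff₀ hnp] at h1; linarith [h1]
    nlinarith [sq_nonneg ((n:ℝ)*y - (j:ℝ)), sq_nonneg y]
  · rcases le_or_gt ((j:ℝ)^2) (4*(n:ℝ)^2) with hc | hc
    · nlinarith [sq_nonneg y]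
    · have hj4 : (j:ℝ) < -2*(n:ℝ) := by nlinarith
      have h3 : (n:ℝ)*y ≤ (j:ℝ)+2 := by
        rw [le_div_iff₀ hnp] at h2; linarith [h2]
      have h4 : (j:ℝ) + 2 ≤ (j:ℝ)/2 := by nlinarith
      nlinarith [sq_nonneg ((n:ℝ)*y - (j:ℝ)/2), sq_nonneg ((n:ℝ)*y)]


noncomputable def smpl (g : SchwartzMap ℝ ℂ) (n : ℕ) : ℤ → ℂ := fun k => g ((k:ℝ)/(n:ℝ))

lemma schwartz_C (g : SchwartzMap ℝ ℂ) : ∃ C : ℝ, 0 < C ∧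
    (∀ x : ℝ, ‖g x‖ ≤ C/(1+x^2)) ∧ (∀ x : ℝ, ‖deriv g x‖ ≤ C/(1+x^2)) ∧
    (∀ x : ℝ, ‖deriv (deriv (⇑g)) x‖ ≤ C/(1+x^2)) := by
  obtain ⟨C0, hC0p, hC0⟩ := schwartz_decay2 g
  have kd1 : ⇑(SchwartzMap.derivCLM ℝ ℂ g) = deriv (⇑g) := by
    funext x; exact SchwartzMap.derivCLM_apply ℝ g x
  obtain ⟨C1, hC1p, hC1⟩ := schwartz_decay2 (SchwartzMap.derivCLM ℝ ℂ g)
  rw [kd1] at hC1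
  have kd2 : ⇑(SchwartzMap.derivCLM ℝ ℂ (SchwartzMap.derivCLM ℝ ℂ g)) = deriv (deriv (⇑g)) := by
    funext x
    rw [SchwartzMap.derivCLM_apply, kd1]
  obtain ⟨C2, hC2p, hC2⟩ := schwartz_decay2 (SchwartzMap.derivCLM ℝ ℂ (SchwartzMap.derivCLM ℝ ℂ g))
  rw [kd2] at hC2
  refine ⟨C0 + C1 + C2, by positivity, fun x => ?_, fun x => ?_, fun x => ?_⟩
  · refine le_trans (hC0 x) ?_
    apply (div_le_div_iff_of_pos_right (by positivity)).2
    linarith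
  · refine le_trans (hC1 x) ?_
    apply (div_le_div_iff_of_pos_right (by positivity)).2
    linarith
  · refine le_trans (hC2 x) ?_
    apply (div_le_div_iff_of_pos_right (by positivity)).2
    linarith

section withg

variable (g : SchwartzMap ℝ ℂ) (C : ℝ) (hCpos : 0 < C)
  (hC0 : ∀ x : ℝ, ‖g x‖ ≤ C/(1+x^2))
  (hC1 : ∀ x : ℝ, ‖deriv (⇑g) x‖ ≤ C/(1+x^2))
  (hC2 : ∀ x : ℝ, ‖deriv (deriv (⇑g)) x‖ ≤ C/(1+x^2))

include hCpos hC0 in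
lemma smpl_bound_neg {n : ℕ} (hn : 2 ≤ n) : ‖smpl g n (-(n:ℤ)^2)‖ ≤ C/(n:ℝ)^2 := by
  have hnr : (2:ℝ) ≤ (n:ℝ) := by exact_mod_cast hn
  have harg : (((-(n:ℤ)^2 : ℤ)):ℝ)/(n:ℝ) = -(n:ℝ) := by
    push_cast
    field_simp
  rw [smpl]
  rw [harg]
  refine le_trans (hC0 _) ?_
  apply div_le_div_of_nonneg_left (le_of_lt hCpos) (by positivity)
  nlinarith

include hCpos hC0 in
lemma smpl_bound_top {n : ℕ} (hn : 2 ≤ n) : ‖smpl g n ((n:ℤ)^2 - 1)‖ ≤ 4*C/(n:ℝ)^2 := by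
  have hnr : (2:ℝ) ≤ (n:ℝ) := by exact_mod_cast hn
  have harg : ((((n:ℤ)^2 - 1 : ℤ)):ℝ)/(n:ℝ) = ((n:ℝ)^2-1)/(n:ℝ) := by push_cast; ring
  rw [smpl]
  rw [harg]
  refine le_trans (hC0 _) ?_
  rw [div_le_div_iff₀ (by positivity) (by positivity)]
  have hx : (n:ℝ) - 1 ≤ ((n:ℝ)^2-1)/(n:ℝ) := by
    rw [le_div_iff₀ (by positivity)]
    nlinarith
  have hx2 : ((n:ℝ)^2-1)/(n:ℝ) ≥ 1 := by linarith
  have hx3 : ((n:ℝ)-1)^2 ≤ (((n:ℝ)^2-1)/(n:ℝ))^2 := by nlinarith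
  nlinarith [hCpos, hx3, sq_nonneg ((n:ℝ)-2)]

include hCpos hC1 in
lemma dd_bound_neg {n : ℕ} (hn : 2 ≤ n) :
    ‖discDeriv n (smpl g n) (-(n:ℤ)^2)‖ ≤ 4*C/(n:ℝ)^2 := by
  have hnr : (2:ℝ) ≤ (n:ℝ) := by exact_mod_cast hn
  have hnz : (4:ℤ) ≤ (n:ℤ)^2 := by
    have : (2:ℤ) ≤ (n:ℤ) := by exact_mod_cast hn
    nlinarith
  rw [discDeriv, if_neg (by omega)]
  rw [norm_mul, Complex.norm_natCast]
  set a : ℝ := -(n:ℝ) with ha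
  set b : ℝ := (-(n:ℝ)^2+1)/(n:ℝ) with hb
  have ha' : ((-(n:ℤ)^2 : ℤ):ℝ)/(n:ℝ) = a := by rw [ha]; push_cast; field_simp
  have hb' : ((-(n:ℤ)^2 + 1 : ℤ):ℝ)/(n:ℝ) = b := by rw [hb]; push_cast; ring
  have hsm : smpl g n (-(n:ℤ)^2 + 1) - smpl g n (-(n:ℤ)^2) = g b - g a := by
    simp only [smpl]; rw [ha', hb']
  rw [hsm]
  have hab : a ≤ b := by
    rw [ha, hb, le_div_iff₀ (by positivity)]
    nlinarith
  have hbound : ∀ x ∈ Set.Icc a b, ‖deriv (⇑g) x‖ ≤ C/(1+((n:ℝ)-1)^2) := by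
    intro x hx
    obtain ⟨hx1, hx2⟩ := hx
    refine le_trans (hC1 x) ?_
    apply div_le_div_of_nonneg_left (le_of_lt hCpos) (by positivity)
    have hxb : x ≤ -((n:ℝ)-1) := by
      rw [hb, le_div_iff₀ (by positivity)] at hx2
      nlinarith [hx2]
    nlinarith [hxb]
  have hmvt := mvt_bound g.differentiable hab hbound
  have hba : b - a = 1/(n:ℝ) := by rw [ha, hb]; field_simp; ring
  rw [hba] at hmvt
  calc (n:ℝ) * ‖g b - g a‖ ≤ (n:ℝ) * (C/(1+((n:ℝ)-1)^2) * (1/(n:ℝ))) := by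
        apply mul_le_mul_of_nonneg_left hmvt (by positivity)
    _ = C/(1+((n:ℝ)-1)^2) := by field_simp
    _ ≤ 4*C/(n:ℝ)^2 := by
        rw [div_le_div_iff₀ (by positivity) (by positivity)]
        nlinarith [hCpos, sq_nonneg ((n:ℝ)-2)]

lemma exp_norm_one_1 (l : ℤ) : ‖Complex.exp ((Real.pi:ℂ) * Complex.I * (l:ℂ))‖ = 1 := by
  have harg : (Real.pi:ℂ) * Complex.I * (l:ℂ) = ((Real.pi * l : ℝ):ℂ) * Complex.I := by
    push_cast; ring
  rw [harg, Complex.norm_exp_ofReal_mul_I]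

lemma exp_norm_one_2 (n : ℕ) (l : ℤ) :
    ‖Complex.exp ((Real.pi:ℂ) * Complex.I * (l:ℂ) / (n:ℂ)^2)‖ = 1 := by
  rw [psiF_arg, Complex.norm_exp_ofReal_mul_I]

lemma exp_norm_one_3 (n : ℕ) (l : ℤ) :
    ‖Complex.exp (-((Real.pi:ℂ) * Complex.I * ((n:ℂ)^2 - 1) * (l:ℂ)) / (n:ℂ)^2)‖ = 1 := by
  have harg : -((Real.pi:ℂ) * Complex.I * ((n:ℂ)^2 - 1) * (l:ℂ)) / (n:ℂ)^2
      = ((-(Real.pi * ((n:ℝ)^2-1) * l) / (n:ℝ)^2 : ℝ):ℂ) * Complex.I := by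
    push_cast; ring
  rw [harg, Complex.norm_exp_ofReal_mul_I]

include hCpos hC0 hC1 in
lemma FF_bound {n : ℕ} (hn : 2 ≤ n) (l : ℤ) (hl : |l| ≤ (n:ℤ)^2) :
    ‖FF n (smpl g n) l‖ ≤ 60*C := by
  have hnr : (2:ℝ) ≤ (n:ℝ) := by exact_mod_cast hn
  have hlr : |(l:ℝ)| ≤ (n:ℝ)^2 := by
    have : ((|l| : ℤ) : ℝ) ≤ (((n:ℤ)^2 : ℤ) : ℝ) := by exact_mod_cast hl
    push_cast at this
    exact this
  have hpsi : ‖psiF n l‖ ≤ 4*(n:ℝ) := by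
    refine le_trans (psiF_upper n (by omega) l) ?_
    calc Real.pi * |(l:ℝ)| / (n:ℝ) ≤ 4 * (n:ℝ)^2 / (n:ℝ) := by
          apply div_le_div_of_nonneg_right ?_ (by positivity)
          nlinarith [Real.pi_le_four, Real.pi_pos, abs_nonneg (l:ℝ)]
      _ = 4*(n:ℝ) := by field_simp
  have hphi : ‖phiF n l‖ ≤ 4*(n:ℝ) := by
    rw [phiF_abs_eq_psiF]
    exact hpsi
  have hDFn : ‖DF n (smpl g n) l‖ ≤ C/(n:ℝ)^3 := by
    rw [DF, norm_mul, norm_mul, norm_mul, exp_norm_one_1, exp_norm_one_2, mul_one, mul_one]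
    have h1 : ‖-(1/(n:ℂ))‖ = 1/(n:ℝ) := by
      rw [norm_neg, norm_div, norm_one, Complex.norm_natCast]
    rw [h1]
    calc 1/(n:ℝ) * ‖smpl g n (-(n:ℤ)^2)‖ ≤ 1/(n:ℝ) * (C/(n:ℝ)^2) := by
          apply mul_le_mul_of_nonneg_left (smpl_bound_neg g C hCpos hC0 hn) (by positivity)
      _ = C/(n:ℝ)^3 := by ring
  have hDF'n : ‖DF' n (smpl g n) l‖ ≤ 4*C/(n:ℝ)^3 := by
    rw [DF', norm_mul, norm_mul, norm_mul, exp_norm_one_1, exp_norm_one_2, mul_one, mul_one]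
    have h1 : ‖-(1/(n:ℂ))‖ = 1/(n:ℝ) := by
      rw [norm_neg, norm_div, norm_one, Complex.norm_natCast]
    rw [h1]
    calc 1/(n:ℝ) * ‖discDeriv n (smpl g n) (-(n:ℤ)^2)‖ ≤ 1/(n:ℝ) * (4*C/(n:ℝ)^2) := by
          apply mul_le_mul_of_nonneg_left (dd_bound_neg g C hCpos hC1 hn) (by positivity)
      _ = 4*C/(n:ℝ)^3 := by ring
  have hCFn : ‖CF n (smpl g n) l‖ ≤ 5*C/(n:ℝ)^2 := by
    rw [CF]
    refine le_trans (norm_sub_le _ _) ?_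
    rw [norm_mul, norm_mul, exp_norm_one_1, exp_norm_one_3, mul_one, mul_one]
    have := smpl_bound_top g C hCpos hC0 hn
    have := smpl_bound_neg g C hCpos hC0 hn
    have : 4*C/(n:ℝ)^2 + C/(n:ℝ)^2 = 5*C/(n:ℝ)^2 := by ring
    linarith [smpl_bound_top g C hCpos hC0 (n := n) hn, smpl_bound_neg g C hCpos hC0 (n := n) hn]
  have hCF'n : ‖CF' n (smpl g n) l‖ ≤ 4*C/(n:ℝ)^2 := by
    rw [CF', norm_mul, exp_norm_one_1, mul_one, norm_neg]
    exact dd_bound_neg g C hCpos hC1 hn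
  rw [FF]
  have step : ‖psiF n l * phiF n l * DF n (smpl g n) l - psiF n l * CF n (smpl g n) l
      + phiF n l * DF' n (smpl g n) l - CF' n (smpl g n) l‖
      ≤ ‖psiF n l‖ * ‖phiF n l‖ * ‖DF n (smpl g n) l‖ + ‖psiF n l‖ * ‖CF n (smpl g n) l‖
        + ‖phiF n l‖ * ‖DF' n (smpl g n) l‖ + ‖CF' n (smpl g n) l‖ := by
    calc ‖_ - _ + _ - _‖ ≤ ‖psiF n l * phiF n l * DF n (smpl g n) l - psiF n l * CF n (smpl g n) l
          + phiF n l * DF' n (smpl g n) l‖ + ‖CF' n (smpl g n) l‖ := norm_sub_le _ _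
      _ ≤ ‖psiF n l * phiF n l * DF n (smpl g n) l - psiF n l * CF n (smpl g n) l‖
          + ‖phiF n l * DF' n (smpl g n) l‖ + ‖CF' n (smpl g n) l‖ := by
            have := norm_add_le (psiF n l * phiF n l * DF n (smpl g n) l
              - psiF n l * CF n (smpl g n) l) (phiF n l * DF' n (smpl g n) l)
            linarith
      _ ≤ ‖psiF n l * phiF n l * DF n (smpl g n) l‖ + ‖psiF n l * CF n (smpl g n) l‖
          + ‖phiF n l * DF' n (smpl g n) l‖ + ‖CF' n (smpl g n) l‖ := by
            have := norm_sub_le (psiF n l * phiF n l * DF n (smpl g n) l)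
              (psiF n l * CF n (smpl g n) l)
            linarith
      _ = ‖psiF n l‖ * ‖phiF n l‖ * ‖DF n (smpl g n) l‖ + ‖psiF n l‖ * ‖CF n (smpl g n) l‖
          + ‖phiF n l‖ * ‖DF' n (smpl g n) l‖ + ‖CF' n (smpl g n) l‖ := by
            rw [norm_mul, norm_mul, norm_mul, norm_mul]
  refine le_trans step ?_
  have hbig : ‖psiF n l‖ * ‖phiF n l‖ * ‖DF n (smpl g n) l‖ ≤ 4*(n:ℝ) * (4*(n:ℝ)) * (C/(n:ℝ)^3) := by
    gcongr
  have hbig2 : ‖psiF n l‖ * ‖CF n (smpl g n) l‖ ≤ 4*(n:ℝ) * (5*C/(n:ℝ)^2) := by gcongr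
  have hbig3 : ‖phiF n l‖ * ‖DF' n (smpl g n) l‖ ≤ 4*(n:ℝ) * (4*C/(n:ℝ)^3) := by gcongr
  have e1 : 4*(n:ℝ) * (4*(n:ℝ)) * (C/(n:ℝ)^3) = 16*C/(n:ℝ) := by field_simp; ring
  have e2 : 4*(n:ℝ) * (5*C/(n:ℝ)^2) = 20*C/(n:ℝ) := by field_simp; ring
  have e3 : 4*(n:ℝ) * (4*C/(n:ℝ)^3) = 16*C/(n:ℝ)^2 := by field_simp; ring
  have hn1 : 16*C/(n:ℝ) ≤ 8*C := by
    rw [div_le_iff₀ (by positivity)]; nlinarith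
  have hn2 : 20*C/(n:ℝ) ≤ 10*C := by
    rw [div_le_iff₀ (by positivity)]; nlinarith
  have hnn : (4:ℝ) ≤ (n:ℝ)^2 := by nlinarith
  have hn3 : 16*C/(n:ℝ)^2 ≤ 4*C := by
    rw [div_le_iff₀ (by positivity)]
    nlinarith [mul_nonneg (le_of_lt hCpos) (by linarith : (0:ℝ) ≤ (n:ℝ)^2 - 4)]
  have hn4 : 4*C/(n:ℝ)^2 ≤ C := by
    rw [div_le_iff₀ (by positivity)]
    nlinarith [mul_nonneg (le_of_lt hCpos) (by linarith : (0:ℝ) ≤ (n:ℝ)^2 - 4)]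
  rw [e1] at hbig; rw [e2] at hbig2; rw [e3] at hbig3
  linarith [hCF'n, hbig, hbig2, hbig3, hn1, hn2, hn3, hn4]

include hCpos hC2 in
lemma D2_interior (hg1d : Differentiable ℝ (deriv (⇑g))) {n : ℕ} (hn : 2 ≤ n) {j : ℤ}
    (hj1 : -(n:ℤ)^2 ≤ j) (hj2 : j ≤ (n:ℤ)^2 - 3) :
    ‖discDeriv n (discDeriv n (smpl g n)) j‖ ≤ 8*C*(n:ℝ)^2/((n:ℝ)^2+(j:ℝ)^2) := by
  have hnr : (2:ℝ) ≤ (n:ℝ) := by exact_mod_cast hn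
  have hnz4 : (4:ℤ) ≤ (n:ℤ)^2 := by
    have : (2:ℤ) ≤ (n:ℤ) := by exact_mod_cast hn
    nlinarith
  have hne1 : ¬ (j = (n:ℤ)^2 - 1) := by omega
  have hne2 : ¬ (j + 1 = (n:ℤ)^2 - 1) := by omega
  set W : ℝ := 8*C*(n:ℝ)^2/((n:ℝ)^2+(j:ℝ)^2) with hW
  have hWpos : 0 < W := by rw [hW]; positivity
  set F : ℝ → ℂ := fun x => g (x + 1/(n:ℝ)) - g x with hF
  have hFd : Differentiable ℝ F := by
    rw [hF]
    exact (g.differentiable.comp (differentiable_id.add_const (1/(n:ℝ)))).sub g.differentiable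
  have haddx : ∀ x : ℝ, DifferentiableAt ℝ (fun y : ℝ => g (y + 1/(n:ℝ))) x := by
    intro x
    have := (g.differentiable (x + 1/(n:ℝ))).comp x
      ((differentiableAt_id.add_const (1/(n:ℝ))) : DifferentiableAt ℝ (fun y : ℝ => y + 1/(n:ℝ)) x)
    exact this
  have hderivF : ∀ x : ℝ, deriv F x = deriv (⇑g) (x + 1/(n:ℝ)) - deriv (⇑g) x := by
    intro x
    rw [hF]
    rw [deriv_fun_sub (haddx x) (g.differentiable x)]
    congr 1
    exact deriv_comp_add_const (⇑g) (1/(n:ℝ)) x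
  set a : ℝ := (j:ℝ)/(n:ℝ) with hA
  set b : ℝ := ((j:ℝ)+1)/(n:ℝ) with hB
  have hab : a ≤ b := by
    rw [hA, hB]
    apply div_le_div_of_nonneg_right (by linarith) (by positivity)
  have key : discDeriv n (discDeriv n (smpl g n)) j = (n:ℂ)^2 * (F b - F a) := by
    rw [discDeriv, if_neg hne1, discDeriv, if_neg hne2, discDeriv, if_neg hne1]
    simp only [smpl]
    have c1 : ((j+1+1 : ℤ):ℝ)/(n:ℝ) = b + 1/(n:ℝ) := by
      rw [hB]; push_cast; field_simp; try ring
    have c2 : ((j+1 : ℤ):ℝ)/(n:ℝ) = b := by rw [hB]; push_cast; try ring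
    have c3 : a + 1/(n:ℝ) = b := by rw [hA, hB]; field_simp; try ring
    have hFba : F b - F a = (g (b + 1/(n:ℝ)) - g b) - (g b - g a) := by
      rw [hF]
      dsimp only
      rw [c3]
    rw [hFba, c1, c2]
    ring
  rw [key, norm_mul, norm_pow, Complex.norm_natCast]
  have hbound : ∀ x ∈ Set.Icc a b, ‖deriv F x‖ ≤ W * (1/(n:ℝ)) := by
    intro x hx
    obtain ⟨hx1, hx2⟩ := hx
    rw [hderivF x]
    have hinner : ∀ y ∈ Set.Icc x (x + 1/(n:ℝ)), ‖deriv (deriv (⇑g)) y‖ ≤ W := by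
      intro y hy
      obtain ⟨hy1, hy2⟩ := hy
      refine le_trans (hC2 y) ?_
      rw [hW, div_le_div_iff₀ (by positivity) (by positivity)]
      have harr : (n:ℝ)^2 + (j:ℝ)^2 ≤ 8*(n:ℝ)^2*(1+y^2) := by
        apply arith8 hn j
        · calc (j:ℝ)/(n:ℝ) = a := by rw [hA]
            _ ≤ x := hx1
            _ ≤ y := hy1
        · calc y ≤ x + 1/(n:ℝ) := hy2
            _ ≤ b + 1/(n:ℝ) := by linarith
            _ = ((j:ℝ)+2)/(n:ℝ) := by rw [hB]; field_simp; ring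
      calc C * ((n:ℝ)^2 + (j:ℝ)^2) ≤ C * (8*(n:ℝ)^2*(1+y^2)) := by
            apply mul_le_mul_of_nonneg_left harr (le_of_lt hCpos)
        _ = 8*C*(n:ℝ)^2 * (1+y^2) := by ring
    have hxx : x ≤ x + 1/(n:ℝ) := by
      have : (0:ℝ) < 1/(n:ℝ) := by positivity
      linarith
    have hstep := mvt_bound hg1d hxx hinner
    have he : (x + 1/(n:ℝ)) - x = 1/(n:ℝ) := by ring
    rw [he] at hstep
    exact hstep
  have hmvt := mvt_bound hFd hab hbound
  have hba : b - a = 1/(n:ℝ) := by rw [hA, hB]; field_simp; try ring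
  rw [hba] at hmvt
  calc (n:ℝ)^2 * ‖F b - F a‖ ≤ (n:ℝ)^2 * (W * (1/(n:ℝ)) * (1/(n:ℝ))) := by
        apply mul_le_mul_of_nonneg_left hmvt (by positivity)
    _ = W := by field_simp; try ring

include hCpos hC1 in
lemma D2_boundary {n : ℕ} (hn : 2 ≤ n) :
    ‖discDeriv n (discDeriv n (smpl g n)) ((n:ℤ)^2 - 2)‖ ≤ 4*C := by
  have hnr : (2:ℝ) ≤ (n:ℝ) := by exact_mod_cast hn
  have hnz4 : (4:ℤ) ≤ (n:ℤ)^2 := by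
    have : (2:ℤ) ≤ (n:ℤ) := by exact_mod_cast hn
    nlinarith
  have hne : ¬ ((n:ℤ)^2 - 2 = (n:ℤ)^2 - 1) := by omega
  rw [discDeriv, if_neg hne, discDeriv, if_pos (by ring), discDeriv, if_neg hne]
  simp only [smpl]
  set x0 : ℝ := (((n:ℤ)^2 - 2 : ℤ):ℝ)/(n:ℝ) with hx0
  set x1 : ℝ := (((n:ℤ)^2 - 2 + 1 : ℤ):ℝ)/(n:ℝ) with hx1
  have hx0v : x0 = ((n:ℝ)^2 - 2)/(n:ℝ) := by rw [hx0]; push_cast; ring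
  have hx1v : x1 = ((n:ℝ)^2 - 1)/(n:ℝ) := by rw [hx1]; push_cast; ring
  have h01 : x0 ≤ x1 := by rw [hx0v, hx1v]; apply div_le_div_of_nonneg_right (by linarith) (by linarith)
  have hbound : ∀ x ∈ Set.Icc x0 x1, ‖deriv (⇑g) x‖ ≤ C/(1+((n:ℝ)-1)^2) := by
    intro x hx
    obtain ⟨hxl, _⟩ := hx
    refine le_trans (hC1 x) ?_
    apply div_le_div_of_nonneg_left (le_of_lt hCpos) (by positivity)
    have hxge : (n:ℝ) - 1 ≤ x := by
      rw [hx0v] at hxl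
      rw [div_le_iff₀ (by linarith : (0:ℝ) < (n:ℝ))] at hxl
      nlinarith [hxl, hnr]
    nlinarith
  have hmvt := mvt_bound g.differentiable h01 hbound
  have hd : x1 - x0 = 1/(n:ℝ) := by rw [hx0v, hx1v]; field_simp; ring
  rw [hd] at hmvt
  calc ‖(n:ℂ) * (0 - (n:ℂ) * (g x1 - g x0))‖
      = (n:ℝ) * ((n:ℝ) * ‖g x1 - g x0‖) := by
        rw [zero_sub, norm_mul, norm_neg, norm_mul, Complex.norm_natCast]
    _ ≤ (n:ℝ) * ((n:ℝ) * (C/(1+((n:ℝ)-1)^2) * (1/(n:ℝ)))) := by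
        apply mul_le_mul_of_nonneg_left (mul_le_mul_of_nonneg_left hmvt (by positivity)) (by positivity)
    _ = (n:ℝ) * C / (1+((n:ℝ)-1)^2) := by field_simp
    _ ≤ 4*C := by
        rw [div_le_iff₀ (by positivity)]
        nlinarith [mul_nonneg (le_of_lt hCpos) (by nlinarith : (0:ℝ) ≤ 4*(1+((n:ℝ)-1)^2) - (n:ℝ))]

lemma T_bound {n : ℕ} (hn : 3 ≤ n) :
    ∑ j ∈ Finset.Icc (-(n:ℤ)^2) ((n:ℤ)^2), (n:ℝ)^2/((n:ℝ)^2+(j:ℝ)^2) ≤ 7*(n:ℝ) := by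
  have hnr : (3:ℝ) ≤ (n:ℝ) := by exact_mod_cast hn
  have hnz : (3:ℤ) ≤ (n:ℤ) := by exact_mod_cast hn
  have h2n : 2*(n:ℤ)+1 ≤ (n:ℤ)^2 := by nlinarith
  set m : ℤ := (n:ℤ)^2 with hm
  have hd1 : Disjoint (Finset.Icc (-m) (-(2*(n:ℤ))-1)) (Finset.Icc (-(2*(n:ℤ))) (2*(n:ℤ))) := by
    rw [Finset.disjoint_left]
    intro x hx hy
    simp only [Finset.mem_Icc] at hx hy
    omega
  have hd2 : Disjoint (Finset.Icc (-m) (-(2*(n:ℤ))-1) ∪ Finset.Icc (-(2*(n:ℤ))) (2*(n:ℤ)))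
      (Finset.Icc (2*(n:ℤ)+1) m) := by
    rw [Finset.disjoint_left]
    intro x hx hy
    simp only [Finset.mem_union, Finset.mem_Icc] at hx hy
    omega
  have hsplit : Finset.Icc (-m) m
      = (Finset.Icc (-m) (-(2*(n:ℤ))-1) ∪ Finset.Icc (-(2*(n:ℤ))) (2*(n:ℤ)))
        ∪ Finset.Icc (2*(n:ℤ)+1) m := by
    ext x
    simp only [Finset.mem_Icc, Finset.mem_union]
    omega
  rw [hsplit, Finset.sum_union hd2, Finset.sum_union hd1]
  have hposside : ∑ j ∈ Finset.Icc (2*(n:ℤ)+1) m, (n:ℝ)^2/((n:ℝ)^2+(j:ℝ)^2) ≤ (n:ℝ) := by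
    have hstep : ∑ j ∈ Finset.Icc (2*(n:ℤ)+1) m, (n:ℝ)^2/((n:ℝ)^2+(j:ℝ)^2)
        ≤ ∑ j ∈ Finset.Icc (2*(n:ℤ)+1) m, (n:ℝ)^2 * ((j:ℝ)^2)⁻¹ := by
      apply Finset.sum_le_sum
      intro j hj
      simp only [Finset.mem_Icc] at hj
      have hjpos : (0:ℝ) < (j:ℝ) := by
        have : (0:ℤ) < j := by omega
        exact_mod_cast this
      rw [div_eq_mul_inv]
      apply mul_le_mul_of_nonneg_left _ (by positivity)
      apply inv_anti₀ (by positivity)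
      nlinarith
    refine le_trans hstep ?_
    rw [← Finset.mul_sum]
    have htele := tele_sum (a := 2*(n:ℤ)+1) (by omega) m
    have hc : ((2*(n:ℤ)+1 : ℤ):ℝ) - 1 = 2*(n:ℝ) := by push_cast; ring
    rw [hc] at htele
    calc (n:ℝ)^2 * ∑ j ∈ Finset.Icc (2*(n:ℤ)+1) m, ((j:ℝ)^2)⁻¹
        ≤ (n:ℝ)^2 * (2*(n:ℝ))⁻¹ := by
          apply mul_le_mul_of_nonneg_left htele (by positivity)
      _ ≤ (n:ℝ) := by
          rw [mul_inv_le_iff₀ (by positivity)]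
          nlinarith
  have hnegside : ∑ j ∈ Finset.Icc (-m) (-(2*(n:ℤ))-1), (n:ℝ)^2/((n:ℝ)^2+(j:ℝ)^2) ≤ (n:ℝ) := by
    have heq : ∑ j ∈ Finset.Icc (-m) (-(2*(n:ℤ))-1), (n:ℝ)^2/((n:ℝ)^2+(j:ℝ)^2)
        = ∑ j ∈ Finset.Icc (2*(n:ℤ)+1) m, (n:ℝ)^2/((n:ℝ)^2+(j:ℝ)^2) := by
      rw [sum_neg_Icc]
      have e1 : -((-(2*(n:ℤ)))-1) = 2*(n:ℤ)+1 := by ring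
      have e2 : -(-m) = m := by ring
      rw [show -(-(2*(n:ℤ))-1) = 2*(n:ℤ)+1 by ring, show -(-m) = m by ring]
      apply Finset.sum_congr rfl
      intro j _
      have : ((-j : ℤ):ℝ)^2 = (j:ℝ)^2 := by push_cast; ring
      rw [this]
    rw [heq]
    exact hposside
  have hmid : ∑ j ∈ Finset.Icc (-(2*(n:ℤ))) (2*(n:ℤ)), (n:ℝ)^2/((n:ℝ)^2+(j:ℝ)^2) ≤ 5*(n:ℝ) := by
    have hone : ∀ j ∈ Finset.Icc (-(2*(n:ℤ))) (2*(n:ℤ)), (n:ℝ)^2/((n:ℝ)^2+(j:ℝ)^2) ≤ 1 := by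
      intro j _
      rw [div_le_one (by positivity)]
      nlinarith [sq_nonneg (j:ℝ)]
    refine le_trans (Finset.sum_le_card_nsmul _ _ 1 hone) ?_
    rw [nsmul_eq_mul, mul_one]
    have hcard : (Finset.Icc (-(2*(n:ℤ))) (2*(n:ℤ))).card = (4*n+1 : ℕ) := by
      rw [Int.card_Icc]
      have : (2*(n:ℤ) + 1 - -(2*(n:ℤ))) = (4*(n:ℤ)+1) := by ring
      rw [this]
      omega
    rw [hcard]
    push_cast
    nlinarith
  linarith

include hCpos hC1 hC2 in
lemma D2FT_bound (hg1d : Differentiable ℝ (deriv (⇑g))) {n : ℕ} (hn : 3 ≤ n) (l : ℤ) :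
    ‖discFT n (discDeriv n (discDeriv n (smpl g n))) l‖ ≤ 60*C := by
  have hn2 : 2 ≤ n := by omega
  have hnr : (3:ℝ) ≤ (n:ℝ) := by exact_mod_cast hn
  have hnz : (3:ℤ) ≤ (n:ℤ) := by exact_mod_cast hn
  have hmz : (9:ℤ) ≤ (n:ℤ)^2 := by nlinarith
  set m : ℤ := (n:ℤ)^2 with hm
  have habs := discFT_abs_le n (by omega) (discDeriv n (discDeriv n (smpl g n))) l
  refine le_trans habs ?_
  have hd1 : Disjoint (Finset.Icc (-m) (m-3)) ({m-2} : Finset ℤ) := by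
    rw [Finset.disjoint_left]; intro x hx hy
    simp only [Finset.mem_Icc] at hx
    simp only [Finset.mem_singleton] at hy
    omega
  have hd2 : Disjoint (Finset.Icc (-m) (m-3) ∪ ({m-2} : Finset ℤ)) ({m-1} : Finset ℤ) := by
    rw [Finset.disjoint_left]; intro x hx hy
    simp only [Finset.mem_union, Finset.mem_Icc, Finset.mem_singleton] at hx
    simp only [Finset.mem_singleton] at hy
    omega
  have hsplit : Finset.Icc (-m) (m-1)
      = (Finset.Icc (-m) (m-3) ∪ ({m-2} : Finset ℤ)) ∪ ({m-1} : Finset ℤ) := by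
    ext x
    simp only [Finset.mem_Icc, Finset.mem_union, Finset.mem_singleton]
    omega
  rw [← hm, hsplit, Finset.sum_union hd2, Finset.sum_union hd1,
    Finset.sum_singleton, Finset.sum_singleton]
  have hz : discDeriv n (discDeriv n (smpl g n)) (m-1) = 0 := by
    rw [discDeriv, if_pos rfl]
  rw [hz, norm_zero, add_zero]
  have hbd : ‖discDeriv n (discDeriv n (smpl g n)) (m-2)‖ ≤ 4*C := by
    exact D2_boundary g C hCpos hC1 hn2
  have hint : ∑ j ∈ Finset.Icc (-m) (m-3), ‖discDeriv n (discDeriv n (smpl g n)) j‖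
      ≤ 56*C*(n:ℝ) := by
    have hstep : ∑ j ∈ Finset.Icc (-m) (m-3), ‖discDeriv n (discDeriv n (smpl g n)) j‖
        ≤ ∑ j ∈ Finset.Icc (-m) (m-3), 8*C*((n:ℝ)^2/((n:ℝ)^2+(j:ℝ)^2)) := by
      apply Finset.sum_le_sum
      intro j hj
      simp only [Finset.mem_Icc] at hj
      refine le_trans (D2_interior g C hCpos hC2 hg1d hn2 hj.1 hj.2) ?_
      rw [mul_div_assoc]
    refine le_trans hstep ?_
    have hsub : ∑ j ∈ Finset.Icc (-m) (m-3), 8*C*((n:ℝ)^2/((n:ℝ)^2+(j:ℝ)^2))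
        ≤ ∑ j ∈ Finset.Icc (-m) m, 8*C*((n:ℝ)^2/((n:ℝ)^2+(j:ℝ)^2)) := by
      apply Finset.sum_le_sum_of_subset_of_nonneg
      · apply Finset.Icc_subset_Icc (le_refl _) (by omega)
      · intro j _ _
        positivity
    refine le_trans hsub ?_
    rw [← Finset.mul_sum]
    calc 8*C * ∑ j ∈ Finset.Icc (-m) m, (n:ℝ)^2/((n:ℝ)^2+(j:ℝ)^2)
        ≤ 8*C * (7*(n:ℝ)) := by
          apply mul_le_mul_of_nonneg_left (T_bound hn) (by positivity)
      _ = 56*C*(n:ℝ) := by ring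
  calc (1/(n:ℝ)) * (∑ j ∈ Finset.Icc (-m) (m-3),
          ‖discDeriv n (discDeriv n (smpl g n)) j‖
        + ‖discDeriv n (discDeriv n (smpl g n)) (m-2)‖)
      ≤ (1/(n:ℝ)) * (56*C*(n:ℝ) + 4*C) := by
        apply mul_le_mul_of_nonneg_left (by linarith) (by positivity)
    _ = 56*C + 4*C/(n:ℝ) := by field_simp; try ring
    _ ≤ 60*C := by
        have h1 : 4*C/(n:ℝ) ≤ 4*C := by
          rw [div_le_iff₀ (by positivity)]
          nlinarith
        linarith


include hCpos hC0 hC1 hC2 in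
lemma main_pointwise (hg1d : Differentiable ℝ (deriv (⇑g))) {n : ℕ} (hn : 3 ≤ n) (l : ℤ)
    (hl1 : 1 ≤ |l|) (hl2 : |l| ≤ (n:ℤ)^2) :
    ‖discFT n (smpl g n) l‖ ≤ (120*C) * ((n:ℝ)^2 / (4*(l:ℝ)^2)) := by
  have hn1 : 1 ≤ n := by omega
  have hnr : (3:ℝ) ≤ (n:ℝ) := by exact_mod_cast hn
  have hlr : (1:ℝ) ≤ |(l:ℝ)| := by
    have : ((1:ℤ):ℝ) ≤ ((|l|:ℤ):ℝ) := by exact_mod_cast hl1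
    push_cast at this
    exact this
  have hid := discFT_sum_by_parts2 n hn1 (smpl g n) l
  have hub : ‖psiF n l ^ 2 * discFT n (smpl g n) l‖ ≤ 120*C := by
    rw [hid]
    refine le_trans (norm_add_le _ _) ?_
    have h1 := D2FT_bound g C hCpos hC1 hC2 hg1d hn l
    have h2 : ‖FF n (smpl g n) l‖ ≤ 60*C := FF_bound g C hCpos hC0 hC1 (by omega) l hl2
    linarith
  have hlow : 2*|(l:ℝ)|/(n:ℝ) ≤ ‖psiF n l‖ := by
    exact psiF_lower n hn1 l hl2
  rw [norm_mul, norm_pow] at hub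
  have hsq : (2*|(l:ℝ)|/(n:ℝ))^2 ≤ ‖psiF n l‖^2 := by
    apply sq_le_sq' _ hlow
    have : (0:ℝ) ≤ 2*|(l:ℝ)|/(n:ℝ) := by positivity
    linarith [norm_nonneg (psiF n l)]
  have hchain : (2*|(l:ℝ)|/(n:ℝ))^2 * ‖discFT n (smpl g n) l‖ ≤ 120*C := by
    refine le_trans ?_ hub
    apply mul_le_mul_of_nonneg_right hsq (norm_nonneg _)
  have hval : (2*|(l:ℝ)|/(n:ℝ))^2 = 4*(l:ℝ)^2/(n:ℝ)^2 := by
    rw [div_pow, mul_pow, _root_.sq_abs]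
    norm_num
  rw [hval] at hchain
  have hlsq : (1:ℝ) ≤ (l:ℝ)^2 := by nlinarith [_root_.sq_abs (l:ℝ)]
  have hlne : (0:ℝ) < (l:ℝ)^2 := by linarith
  have hl0 : (l:ℝ) ≠ 0 := fun h => by simp [h] at hlne
  calc ‖discFT n (smpl g n) l‖
      = ((n:ℝ)^2/(4*(l:ℝ)^2)) * (4*(l:ℝ)^2/(n:ℝ)^2 * ‖discFT n (smpl g n) l‖) := by
        field_simp
    _ ≤ ((n:ℝ)^2/(4*(l:ℝ)^2)) * (120*C) := by
        apply mul_le_mul_of_nonneg_left hchain (by positivity)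
    _ = 120*C * ((n:ℝ)^2 / (4*(l:ℝ)^2)) := by ring

end withg

/-- **Tail estimate for the discrete Fourier transform of a Schwartz function.**
For every `ε > 0` there is `N` such that for all `n > N` and integers `N < L ≤ L' ≤ n`,
both tails `(1/n) ∑_{j=Ln}^{L'n-1} |(g_n)^_n(j)|` and
`(1/n) ∑_{j=-L'n}^{-Ln-1} |(g_n)^_n(j)|` are `< ε`, where `g_n(j) = g(j/n)`. -/
theorem discFT_tail_estimate (g : SchwartzMap ℝ ℂ) :
    ∀ ε : ℝ, 0 < ε → ∃ N : ℕ, ∀ n : ℕ, N < n → ∀ L L' : ℤ,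
      (N : ℤ) < L → L ≤ L' → L' ≤ (n : ℤ) →
      (1 / (n : ℝ)) * ∑ j ∈ Finset.Icc (L * n) (L' * n - 1),
          ‖discFT n (fun k : ℤ => g ((k : ℝ) / (n : ℝ))) j‖ < ε ∧
      (1 / (n : ℝ)) * ∑ j ∈ Finset.Icc (-(L' * n)) (-(L * n) - 1),
          ‖discFT n (fun k : ℤ => g ((k : ℝ) / (n : ℝ))) j‖ < ε := by
  intro ε hε
  obtain ⟨C, hCpos, hC0, hC1, hC2⟩ := schwartz_C g
  have kd1 : ⇑(SchwartzMap.derivCLM ℝ ℂ g) = deriv (⇑g) := by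
    funext x; exact SchwartzMap.derivCLM_apply ℝ g x
  have hg1d : Differentiable ℝ (deriv (⇑g)) := kd1 ▸ (SchwartzMap.derivCLM ℝ ℂ g).differentiable
  obtain ⟨N0, hN0⟩ := exists_nat_gt (60*C/ε)
  refine ⟨N0 + 2, ?_⟩
  intro n hn L L' hL hLL' hL'n
  have hn3 : 3 ≤ n := by omega
  have hnz : (3:ℤ) ≤ (n:ℤ) := by exact_mod_cast hn3
  have hnr : (3:ℝ) ≤ (n:ℝ) := by exact_mod_cast hn3
  have hLi : (N0:ℤ) + 2 < L := by exact_mod_cast hL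
  have hN0nn : (0:ℤ) ≤ (N0:ℤ) := Int.ofNat_nonneg N0
  have hL3 : (3:ℤ) ≤ L := by omega
  have hLr : 60*C/ε < (L:ℝ) := by
    have h3 : ((N0:ℤ)+3 : ℤ) ≤ L := by omega
    have h4 : ((N0:ℝ)+3 : ℝ) ≤ (L:ℝ) := by exact_mod_cast h3
    linarith [hN0]
  have hLrr : (3:ℝ) ≤ (L:ℝ) := by exact_mod_cast hL3
  have hLn2 : (2:ℤ) ≤ L*(n:ℤ) := by nlinarith
  have hLnr : ((L*(n:ℤ) : ℤ):ℝ) = (L:ℝ)*(n:ℝ) := by push_cast; ring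
  have hLnpos : (0:ℝ) < (L:ℝ)*(n:ℝ) := by positivity
  have hL'n2 : L'*(n:ℤ) ≤ (n:ℤ)^2 := by nlinarith
  have hLnR2 : (2:ℝ) ≤ (L:ℝ)*(n:ℝ) := by
    rw [← hLnr]; exact_mod_cast hLn2
  have hfun : (fun k : ℤ => g ((k:ℝ)/(n:ℝ))) = smpl g n := rfl
  rw [hfun]
  have hfinal : ∀ S : Finset ℤ, (∀ j ∈ S, 1 ≤ |j| ∧ |j| ≤ (n:ℤ)^2) →
      ((∑ j ∈ S, ((j:ℝ)^2)⁻¹) ≤ 2/((L:ℝ)*(n:ℝ))) →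
      (1/(n:ℝ)) * ∑ j ∈ S, ‖discFT n (smpl g n) j‖ < ε := by
    intro S hmem hsum
    have h1 : ∑ j ∈ S, ‖discFT n (smpl g n) j‖
        ≤ ∑ j ∈ S, (120*C) * ((n:ℝ)^2/4) * ((j:ℝ)^2)⁻¹ := by
      apply Finset.sum_le_sum
      intro j hj
      refine le_trans (main_pointwise g C hCpos hC0 hC1 hC2 hg1d hn3 j (hmem j hj).1
        (hmem j hj).2) (le_of_eq ?_)
      field_simp
    rw [← Finset.mul_sum] at h1
    have h2 : (120*C) * ((n:ℝ)^2/4) * (∑ j ∈ S, ((j:ℝ)^2)⁻¹)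
        ≤ (120*C) * ((n:ℝ)^2/4) * (2/((L:ℝ)*(n:ℝ))) := by
      apply mul_le_mul_of_nonneg_left hsum (by positivity)
    have h3 : (1/(n:ℝ)) * ((120*C) * ((n:ℝ)^2/4) * (2/((L:ℝ)*(n:ℝ)))) = 60*C/(L:ℝ) := by
      field_simp
      ring
    have h4 : 60*C/(L:ℝ) < ε := by
      rw [div_lt_iff₀ (by linarith : (0:ℝ) < (L:ℝ))]
      rw [div_lt_iff₀ hε] at hLr
      linarith
    calc (1/(n:ℝ)) * ∑ j ∈ S, ‖discFT n (smpl g n) j‖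
        ≤ (1/(n:ℝ)) * ((120*C) * ((n:ℝ)^2/4) * (2/((L:ℝ)*(n:ℝ)))) := by
          apply mul_le_mul_of_nonneg_left (le_trans h1 h2) (by positivity)
      _ = 60*C/(L:ℝ) := h3
      _ < ε := h4
  constructor
  · apply hfinal
    · intro j hj
      simp only [Finset.mem_Icc] at hj
      have hj1 : (1:ℤ) ≤ j := by omega
      rw [_root_.abs_of_nonneg (by omega : (0:ℤ) ≤ j)]
      omega
    · refine le_trans (tele_sum hLn2 _) ?_
      rw [hLnr]
      rw [inv_eq_one_div, div_le_div_iff₀ (by linarith) (by linarith)]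
      linarith
  · apply hfinal
    · intro j hj
      simp only [Finset.mem_Icc] at hj
      rw [_root_.abs_of_neg (by omega : j < 0)]
      omega
    · rw [sum_neg_Icc]
      rw [show -(-(L*(n:ℤ))-1) = L*(n:ℤ)+1 by ring, show -(-(L'*(n:ℤ))) = L'*(n:ℤ) by ring]
      have hcongr : ∑ j ∈ Finset.Icc (L*(n:ℤ)+1) (L'*(n:ℤ)), (((-j : ℤ):ℝ)^2)⁻¹
          = ∑ j ∈ Finset.Icc (L*(n:ℤ)+1) (L'*(n:ℤ)), ((j:ℝ)^2)⁻¹ := by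
        apply Finset.sum_congr rfl
        intro j _
        have : ((-j : ℤ):ℝ)^2 = (j:ℝ)^2 := by push_cast; ring
        rw [this]
      rw [hcongr]
      refine le_trans (tele_sum (by omega) _) ?_
      have hc : ((L*(n:ℤ)+1 : ℤ):ℝ) - 1 = (L:ℝ)*(n:ℝ) := by push_cast; ring
      rw [hc]
      rw [inv_eq_one_div, div_le_div_iff₀ (by linarith) (by linarith)]
      linarith
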